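/- Dual-variable conservation and mean dynamics of Algorithm 1 (equations (10)–(11)). For the iterates of Algorithm 1, for every k ∈ ℕ: (i) Σ_{i=1}^{n} v_{i,k} = 0, and (ii) x̄_{k+1} = x̄_k − (η/n)·Σ_{i=1}^{n} ∇f_i(x_{i,k}), where x̄_k = (1/n)·Σ_{i=1}^n x_{i,k}. -/
import Mathlib


open Finset

/-- Equations (10)–(11) of the paper: along Algorithm 1, the dual variables sum to zero and
the average iterate obeys `x̄_{k+1} = x̄_k − (η/n)·Σ_i ∇f_i(x_{i,k})`. -/
theorem algorithm1_dual_conservation_and_mean_dynamics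
    (n d : ℕ) (hn : 1 ≤ n) (hd : 1 ≤ d)
    (L : Matrix (Fin n) (Fin n) ℝ)
    (hLsymm : L.IsSymm)
    (hL1 : L.mulVec (fun _ => 1) = 0)
    (f : Fin n → EuclideanSpace ℝ (Fin d) → ℝ)
    (hdiff : ∀ i, Differentiable ℝ (f i))
    (C : EuclideanSpace ℝ (Fin d) → EuclideanSpace ℝ (Fin d))
    (α β η ψ : ℝ) (hα : 0 < α) (hβ : 0 < β) (hη : 0 < η) (hψ : 0 < ψ)
    (x v a b q : ℕ → Fin n → EuclideanSpace ℝ (Fin d))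
    (ha0 : ∀ i, a 0 i = 0) (hb0 : ∀ i, b 0 i = 0) (hv0 : ∀ i, v 0 i = 0)
    (hq0 : ∀ i, q 0 i = C (x 0 i))
    (ha : ∀ k i, a (k+1) i = a k i + ψ • q k i)
    (hb : ∀ k i, b (k+1) i = b k i + ψ • (q k i - ∑ j, L i j • q k j))
    (hx : ∀ k i, x (k+1) i = x k i
        - (η * α) • (a k i - b k i + ∑ j, L i j • q k j)
        - η • (β • v k i + gradient (f i) (x k i)))
    (hv : ∀ k i, v (k+1) i = v k i + (η * β) • (a k i - b k i + ∑ j, L i j • q k j))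
    (hq : ∀ k i, q (k+1) i = C (x (k+1) i - a (k+1) i)) :
    ∀ k : ℕ,
      (∑ i, v k i) = 0 ∧
      (n : ℝ)⁻¹ • ∑ i, x (k+1) i
        = (n : ℝ)⁻¹ • (∑ i, x k i) - (η / n) • ∑ i, gradient (f i) (x k i) := by

  -- column sums of L vanish
  have hcol : ∀ j, (∑ i, L i j) = 0 := by
    intro j
    have hrow : (∑ i, L j i) = 0 := by
      have := congrFun hL1 j
      simpa [Matrix.mulVec, dotProduct] using this
    calc (∑ i, L i j) = ∑ i, L j i := by
          refine Finset.sum_congr rfl fun i _ => ?_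
          have := congrFun (congrFun hLsymm.eq j) i
          simpa [Matrix.transpose] using this
      _ = 0 := hrow
  -- sum over i of the Laplacian-mixed term vanishes
  have hLsum : ∀ k, (∑ i, ∑ j, L i j • q k j) = (0 : EuclideanSpace ℝ (Fin d)) := by
    intro k
    rw [Finset.sum_comm]
    have : ∀ j : Fin n, (∑ i, L i j • q k j) = 0 := by
      intro j
      rw [← Finset.sum_smul, hcol, zero_smul]
    simp [this]
  -- sum of a - b vanishes for all k
  have hab : ∀ k, (∑ i, (a k i - b k i)) = 0 := by
    intro k
    induction k with
    | zero => simp [ha0, hb0]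
    | succ k ih =>
      have : ∀ i, a (k+1) i - b (k+1) i = (a k i - b k i) + ψ • (∑ j, L i j • q k j) := by
        intro i
        rw [ha, hb]
        simp [smul_sub]
        abel
      simp only [this]
      rw [Finset.sum_add_distrib, ih, ← Finset.smul_sum, hLsum, smul_zero, add_zero]
  -- sum of the full mixed term vanishes
  have hw : ∀ k, (∑ i, (a k i - b k i + ∑ j, L i j • q k j)) = 0 := by
    intro k
    rw [Finset.sum_add_distrib, hab, hLsum, add_zero]
  -- sum of v vanishes
  have hvsum : ∀ k, (∑ i, v k i) = 0 := by
    intro k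
    induction k with
    | zero => simp [hv0]
    | succ k ih =>
      simp only [hv]
      rw [Finset.sum_add_distrib, ih, ← Finset.smul_sum, hw, smul_zero, add_zero]
  intro k
  refine ⟨hvsum k, ?_⟩
  have hxsum : (∑ i, x (k+1) i) = (∑ i, x k i) - η • ∑ i, gradient (f i) (x k i) := by
    simp only [hx]
    rw [Finset.sum_sub_distrib, Finset.sum_sub_distrib, ← Finset.smul_sum, hw, smul_zero,
      sub_zero, ← Finset.smul_sum, Finset.sum_add_distrib, ← Finset.smul_sum, hvsum k,
      smul_zero, zero_add]
  rw [hxsum, smul_sub, smul_smul, div_eq_inv_mul]
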